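/- Let d ≥ 1 and let μ_1, …, μ_d be the d (distinct, real) roots of the physicists' Hermite polynomial H_d^{ph}(X). Then ∏_{1 ≤ j < k ≤ d} (μ_j − μ_k)² = 2^{−d(d−1)/2} · ∏_{ν=1}^{d} ν^{ν}. -/

import Mathlib

open Polynomial Finset

/-- The physicists' Hermite polynomial
`H_d^{ph}(X) = ∑_{k ≤ d/2} (-1)^k d!/(k!(d-2k)!) (2X)^(d-2k)`,
normalized by the generating function `e^{2Xt - t²} = ∑ H_d^{ph}(X) t^d/d!`. -/
noncomputable def hermitePh (d : ℕ) : Polynomial ℝ :=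
  ∑ k ∈ Finset.range (d / 2 + 1),
    Polynomial.C ((-1 : ℝ) ^ k * (d.factorial : ℝ) /
      ((k.factorial : ℝ) * ((d - 2 * k).factorial : ℝ))) *
      (2 * Polynomial.X) ^ (d - 2 * k)

noncomputable def Lp (d k : ℕ) : Polynomial ℝ :=
  Polynomial.C ((-1 : ℝ) ^ k * (d.factorial : ℝ) /
      ((k.factorial : ℝ) * ((d - 2 * k).factorial : ℝ))) *
      (2 * Polynomial.X) ^ (d - 2 * k)

noncomputable def Ep (e k : ℕ) : Polynomial ℝ :=
  Polynomial.C ((-1 : ℝ) ^ k * (2*(k:ℝ)) * (e.factorial : ℝ) /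
      ((k.factorial : ℝ) * (((e+1) - 2 * k).factorial : ℝ))) *
      (2 * Polynomial.X) ^ ((e+1) - 2 * k)

lemma hermitePh_eq_sum (d : ℕ) :
    hermitePh d = ∑ k ∈ Finset.range (d / 2 + 1), Lp d k := rfl

lemma factR_ne (n : ℕ) : ((n.factorial : ℝ)) ≠ 0 :=
  Nat.cast_ne_zero.mpr n.factorial_ne_zero

lemma hermitePh_zero : hermitePh 0 = 1 := by simp [hermitePh]

lemma helperLM (a b : ℝ) (n : ℕ) :
    C a * (2*X : ℝ[X])^(n+1) - 2*X*(C b * (2*X)^n) = C (a-b) * (2*X)^(n+1) := by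
  rw [map_sub]; ring

lemma helperD (c : ℝ) (n : ℕ) :
    derivative (C c * (2*X : ℝ[X])^(n+1)) = C (c * (2*(n+1))) * (2*X)^n := by
  rw [derivative_C_mul, derivative_pow]
  simp only [derivative_mul, derivative_X, derivative_ofNat, Nat.add_sub_cancel]
  simp only [map_mul, map_ofNat, map_add, map_one, Polynomial.C_eq_natCast]
  push_cast
  ring

/-- (a): for `2*k ≤ e`, `Lp (e+1) k - 2X * Lp e k = Ep e k`. -/
lemma lemA (e k : ℕ) (hk : 2*k ≤ e) :
    Lp (e+1) k - 2*X*(Lp e k) = Ep e k := by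
  obtain ⟨n, rfl⟩ : ∃ n, e = 2*k + n := ⟨e - 2*k, by omega⟩
  unfold Lp Ep
  rw [show 2*k+n+1 - 2*k = n+1 from by omega, show 2*k+n - 2*k = n from by omega, helperLM]
  congr 1
  have h1 : ((2*k+n+1).factorial : ℝ) = (2*(k:ℝ)+(n:ℝ)+1) * ((2*k+n).factorial : ℝ) := by
    rw [Nat.factorial_succ]; push_cast; ring
  have h2 : ((n+1).factorial : ℝ) = ((n:ℝ)+1) * (n.factorial : ℝ) := by
    rw [Nat.factorial_succ]; push_cast; ring
  rw [h1, h2]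
  have hk' := factR_ne k; have hn' := factR_ne n
  have hkn' := factR_ne (2*k+n)
  have hn1 : ((n:ℝ)+1) ≠ 0 := by positivity
  field_simp
  ring

/-- (b): for `2*k+2 ≤ e`, `Ep e (k+1) = - derivative (Lp e k)`. -/
lemma lemB (e k : ℕ) (hk : 2*k+2 ≤ e) :
    Ep e (k+1) = -(derivative (Lp e k)) := by
  obtain ⟨n, rfl⟩ : ∃ n, e = 2*k+2+n := ⟨e - (2*k+2), by omega⟩
  unfold Lp Ep
  rw [show 2*k+2+n+1 - 2*(k+1) = n+1 from by omega,
    show 2*k+2+n - 2*k = n+1+1 from by omega, helperD, ← neg_mul, ← map_neg]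
  congr 1
  have h1 : ((k+1).factorial : ℝ) = ((k:ℝ)+1) * (k.factorial : ℝ) := by
    rw [Nat.factorial_succ]; push_cast; ring
  have h2 : ((n+1+1).factorial : ℝ) = ((n:ℝ)+2) * ((n+1).factorial : ℝ) := by
    rw [Nat.factorial_succ]; push_cast; ring
  rw [h1, h2]
  have hk' := factR_ne k; have hn' := factR_ne (n+1)
  have h3 : ((k:ℝ)+1) ≠ 0 := by positivity
  have h4 : ((n:ℝ)+2) ≠ 0 := by positivity
  congr 1
  push_cast
  field_simp
  ring

/-- (b'): boundary term in the odd case. -/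
lemma lemB' (m : ℕ) :
    Lp (2*m+2) (m+1) = -(derivative (Lp (2*m+1) m)) := by
  unfold Lp
  rw [show 2*m+2 - 2*(m+1) = 0 from by omega,
    show 2*m+1 - 2*m = 0+1 from by omega, helperD, ← neg_mul, ← map_neg]
  congr 1
  have h1 : ((m+1).factorial : ℝ) = ((m:ℝ)+1) * (m.factorial : ℝ) := by
    rw [Nat.factorial_succ]; push_cast; ring
  have h2 : ((2*m+2).factorial : ℝ) = (2*(m:ℝ)+2) * ((2*m+1).factorial : ℝ) := by
    rw [show (2*m+2) = (2*m+1)+1 from by omega, Nat.factorial_succ]; push_cast; ring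
  rw [h1, h2]
  have hm' := factR_ne m; have hm2 := factR_ne (2*m+1)
  have h3 : ((m:ℝ)+1) ≠ 0 := by positivity
  simp only [Nat.factorial_zero, Nat.factorial_one, Nat.cast_one, mul_one]
  field_simp
  push_cast
  ring

lemma Ep_zero (e : ℕ) : Ep e 0 = 0 := by simp [Ep]

lemma lemD0 (m : ℕ) : derivative (Lp (2*m) m) = 0 := by
  unfold Lp
  rw [show 2*m - 2*m = 0 from by omega]
  simp

lemma hermitePh_rec (e : ℕ) :
    hermitePh (e+1) = 2*X*hermitePh e - derivative (hermitePh e) := by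
  rcases Nat.even_or_odd e with ⟨m, hm⟩ | ⟨m, hm⟩
  · obtain rfl : e = 2*m := by omega
    rw [hermitePh_eq_sum, hermitePh_eq_sum, show (2*m+1)/2+1 = m+1 from by omega,
      show (2*m)/2+1 = m+1 from by omega, derivative_sum, Finset.mul_sum]
    have h0 : ∑ k ∈ Finset.range (m+1), (Lp (2*m+1) k - 2*X*Lp (2*m) k)
        = (∑ k ∈ Finset.range (m+1), Lp (2*m+1) k)
          - ∑ k ∈ Finset.range (m+1), 2*X*Lp (2*m) k := Finset.sum_sub_distrib _ _
    have h1 : ∑ k ∈ Finset.range (m+1), (Lp (2*m+1) k - 2*X*Lp (2*m) k)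
        = ∑ k ∈ Finset.range (m+1), Ep (2*m) k :=
      Finset.sum_congr rfl fun k hk =>
        lemA (2*m) k (by have := Finset.mem_range.mp hk; omega)
    have h2 : ∑ k ∈ Finset.range (m+1), Ep (2*m) k
        = ∑ k ∈ Finset.range m, Ep (2*m) (k+1) := by
      rw [Finset.sum_range_succ', Ep_zero, add_zero]
    have h3 : ∑ k ∈ Finset.range (m+1), derivative (Lp (2*m) k)
        = (∑ k ∈ Finset.range m, derivative (Lp (2*m) k)) + derivative (Lp (2*m) m) :=
      Finset.sum_range_succ _ m
    have h4a : ∑ k ∈ Finset.range m, (Ep (2*m) (k+1) + derivative (Lp (2*m) k))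
        = (∑ k ∈ Finset.range m, Ep (2*m) (k+1))
          + ∑ k ∈ Finset.range m, derivative (Lp (2*m) k) := Finset.sum_add_distrib
    have h4 : ∑ k ∈ Finset.range m, (Ep (2*m) (k+1) + derivative (Lp (2*m) k)) = 0 :=
      Finset.sum_eq_zero fun k hk => by
        rw [lemB (2*m) k (by have := Finset.mem_range.mp hk; omega)]; ring
    have hdm : derivative (Lp (2*m) m) = 0 := lemD0 m
    linear_combination -h0 + h1 + h2 + h3 - h4a + h4 + hdm
  · obtain rfl : e = 2*m+1 := by omega
    rw [hermitePh_eq_sum, hermitePh_eq_sum, show (2*m+1+1)/2+1 = (m+1)+1 from by omega,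
      show (2*m+1)/2+1 = m+1 from by omega, derivative_sum, Finset.mul_sum,
      Finset.sum_range_succ (Lp (2*m+1+1)) (m+1)]
    have h0 : ∑ k ∈ Finset.range (m+1), (Lp (2*m+1+1) k - 2*X*Lp (2*m+1) k)
        = (∑ k ∈ Finset.range (m+1), Lp (2*m+1+1) k)
          - ∑ k ∈ Finset.range (m+1), 2*X*Lp (2*m+1) k := Finset.sum_sub_distrib _ _
    have h1 : ∑ k ∈ Finset.range (m+1), (Lp (2*m+1+1) k - 2*X*Lp (2*m+1) k)
        = ∑ k ∈ Finset.range (m+1), Ep (2*m+1) k :=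
      Finset.sum_congr rfl fun k hk =>
        lemA (2*m+1) k (by have := Finset.mem_range.mp hk; omega)
    have h2 : ∑ k ∈ Finset.range (m+1), Ep (2*m+1) k
        = ∑ k ∈ Finset.range m, Ep (2*m+1) (k+1) := by
      rw [Finset.sum_range_succ', Ep_zero, add_zero]
    have h3 : ∑ k ∈ Finset.range (m+1), derivative (Lp (2*m+1) k)
        = (∑ k ∈ Finset.range m, derivative (Lp (2*m+1) k)) + derivative (Lp (2*m+1) m) :=
      Finset.sum_range_succ _ m
    have h4a : ∑ k ∈ Finset.range m, (Ep (2*m+1) (k+1) + derivative (Lp (2*m+1) k))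
        = (∑ k ∈ Finset.range m, Ep (2*m+1) (k+1))
          + ∑ k ∈ Finset.range m, derivative (Lp (2*m+1) k) := Finset.sum_add_distrib
    have h4 : ∑ k ∈ Finset.range m, (Ep (2*m+1) (k+1) + derivative (Lp (2*m+1) k)) = 0 :=
      Finset.sum_eq_zero fun k hk => by
        rw [lemB (2*m+1) k (by have := Finset.mem_range.mp hk; omega)]; ring
    have h5 : Lp (2*m+1+1) (m+1) = -(derivative (Lp (2*m+1) m)) := lemB' m
    linear_combination -h0 + h1 + h2 + h3 - h4a + h4 + h5

lemma hermitePh_deriv (d : ℕ) :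
    derivative (hermitePh (d+1)) = C (2*((d:ℝ)+1)) * hermitePh d := by
  induction d with
  | zero =>
      rw [hermitePh_rec 0, hermitePh_zero]
      simp only [derivative_sub, derivative_one, derivative_zero, mul_one, sub_zero,
        derivative_mul, derivative_X, derivative_ofNat, Nat.cast_zero]
      norm_num
      exact (map_ofNat C 2).symm
  | succ d IH =>
      rw [hermitePh_rec (d+1), derivative_sub, derivative_mul, IH, derivative_C_mul,
        hermitePh_rec d]
      simp only [derivative_mul, derivative_X, derivative_ofNat, map_mul, map_add, map_one,
        map_ofNat, Nat.cast_add, Nat.cast_one]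
      ring

lemma hermitePh_rec3 (d : ℕ) :
    hermitePh (d+2) = 2*X*hermitePh (d+1) - C (2*((d:ℝ)+1)) * hermitePh d := by
  rw [show d+2 = (d+1)+1 from rfl, hermitePh_rec (d+1), hermitePh_deriv d]

lemma hermitePh_coeff_natDegree (d : ℕ) :
    (hermitePh d).coeff d = 2^d ∧ (hermitePh d).natDegree ≤ d := by
  induction d with
  | zero => simp [hermitePh_zero]
  | succ d IH =>
      obtain ⟨hc, hdeg⟩ := IH
      have h2 : (2:ℝ[X]) = C 2 := (map_ofNat C 2).symm
      have hrw : 2*X*hermitePh d = C 2 * (X * hermitePh d) := by rw [← h2]; ring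
      constructor
      · rw [hermitePh_rec d, coeff_sub, hrw, coeff_C_mul, coeff_X_mul, hc,
          coeff_derivative, coeff_eq_zero_of_natDegree_lt (lt_of_le_of_lt hdeg (by omega))]
        ring
      · rw [hermitePh_rec d]
        refine le_trans (natDegree_sub_le _ _) (max_le ?_ ?_)
        · refine le_trans natDegree_mul_le ?_
          have h1 : (2*X : ℝ[X]).natDegree ≤ 1 :=
            le_trans natDegree_mul_le (by simp [natDegree_X, natDegree_ofNat])
          omega
        · exact le_trans (natDegree_derivative_le _) (by omega)

lemma hermitePh_natDegree (d : ℕ) : (hermitePh d).natDegree = d := by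
  obtain ⟨hc, hdeg⟩ := hermitePh_coeff_natDegree d
  exact le_antisymm hdeg (le_natDegree_of_ne_zero (by rw [hc]; positivity))

lemma hermitePh_leadingCoeff (d : ℕ) : (hermitePh d).leadingCoeff = 2^d := by
  rw [leadingCoeff, hermitePh_natDegree, (hermitePh_coeff_natDegree d).1]

lemma hermitePh_ne_zero (d : ℕ) : hermitePh d ≠ 0 := fun h => by
  have h2 := hermitePh_leadingCoeff d
  rw [h, leadingCoeff_zero] at h2
  exact (pow_ne_zero d (two_ne_zero)) h2.symm

/-! ### Part B: complex roots -/

noncomputable def Qc (d : ℕ) : Polynomial ℂ := (hermitePh d).map (algebraMap ℝ ℂ)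

lemma Qc_natDegree (d : ℕ) : (Qc d).natDegree = d := by
  rw [Qc, natDegree_map_eq_of_injective (algebraMap ℝ ℂ).injective, hermitePh_natDegree]

lemma Qc_leadingCoeff (d : ℕ) : (Qc d).leadingCoeff = 2^d := by
  rw [leadingCoeff, Qc_natDegree, Qc, coeff_map, (hermitePh_coeff_natDegree d).1]
  simp

lemma Qc_ne_zero (d : ℕ) : Qc d ≠ 0 := fun h => by
  have h2 := Qc_leadingCoeff d
  rw [h, leadingCoeff_zero] at h2
  exact (pow_ne_zero d (two_ne_zero)) h2.symm

lemma Qc_zero : Qc 0 = 1 := by rw [Qc, hermitePh_zero, Polynomial.map_one]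

lemma Qc_rec3 (d : ℕ) :
    Qc (d+2) = 2*X*Qc (d+1) - C (2*((d:ℂ)+1)) * Qc d := by
  simp only [Qc, hermitePh_rec3, Polynomial.map_sub, Polynomial.map_mul,
    Polynomial.map_ofNat, Polynomial.map_X, Polynomial.map_C]
  congr 2
  push_cast
  simp

lemma Qc_deriv (d : ℕ) :
    derivative (Qc (d+1)) = C (2*((d:ℂ)+1)) * Qc d := by
  simp only [Qc, derivative_map, hermitePh_deriv, Polynomial.map_mul, Polynomial.map_C]
  congr 2
  push_cast
  simp

lemma Qc_card_roots (d : ℕ) : Multiset.card (Qc d).roots = d := by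
  conv_rhs => rw [← Qc_natDegree d]
  exact splits_iff_card_roots.mp (IsAlgClosed.splits (Qc d))

lemma Qc_eq_prod (d : ℕ) :
    Qc d = C (2^d : ℂ) * ((Qc d).roots.map fun a => X - C a).prod := by
  have := (IsAlgClosed.splits (Qc d)).eq_prod_roots
  rwa [Qc_leadingCoeff] at this

lemma Qc_eval_eq_prod (d : ℕ) (x : ℂ) :
    eval x (Qc d) = 2^d * ((Qc d).roots.map fun ν => x - ν).prod := by
  conv_lhs => rw [Qc_eq_prod d]
  rw [eval_mul, eval_C, eval_multiset_prod, Multiset.map_map]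
  simp

lemma multiset_prod_comm (A B : Multiset ℂ) (f : ℂ → ℂ → ℂ) :
    (A.map (fun a => (B.map (f a)).prod)).prod
      = (B.map (fun b => (A.map (fun a => f a b)).prod)).prod := by
  induction A using Multiset.induction with
  | empty => simp
  | cons a A ih => simp [Multiset.prod_map_mul, ih]

lemma multiset_prod_const_mul (A : Multiset ℂ) (c : ℂ) (g : ℂ → ℂ) :
    (A.map (fun a => c * g a)).prod = c ^ Multiset.card A * (A.map g).prod := by
  induction A using Multiset.induction with
  | empty => simp
  | cons a A ih => simp [ih, pow_succ]; ring

lemma multiset_prod_neg (A : Multiset ℂ) (g : ℂ → ℂ) :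
    (A.map (fun a => -g a)).prod = (-1) ^ Multiset.card A * (A.map g).prod := by
  induction A using Multiset.induction with
  | empty => simp
  | cons a A ih => simp [ih, pow_succ]; ring

lemma swap_eval (n : ℕ) :
    (((Qc (n+1)).roots).map (fun μ => eval μ (Qc (n+2)))).prod
      = (((Qc (n+2)).roots).map (fun ν => eval ν (Qc (n+1)))).prod := by
  have hL : (((Qc (n+1)).roots).map (fun μ => eval μ (Qc (n+2)))).prod
      = ((2:ℂ)^(n+2)) ^ (n+1) *
        (((Qc (n+1)).roots).map
          (fun μ => (((Qc (n+2)).roots).map (fun ν => μ - ν)).prod)).prod := by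
    have e1 : (((Qc (n+1)).roots).map (fun μ => eval μ (Qc (n+2)))).prod
        = (((Qc (n+1)).roots).map
            (fun μ => (2:ℂ)^(n+2) * (((Qc (n+2)).roots).map (fun ν => μ - ν)).prod)).prod := by
      congr 1
      exact Multiset.map_congr rfl fun μ _ => Qc_eval_eq_prod (n+2) μ
    rw [e1, multiset_prod_const_mul, Qc_card_roots]
  have hR : (((Qc (n+2)).roots).map (fun ν => eval ν (Qc (n+1)))).prod
      = ((2:ℂ)^(n+1)) ^ (n+2) * ((-1:ℂ)^(n+1)) ^ (n+2) *
        (((Qc (n+2)).roots).map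
          (fun ν => (((Qc (n+1)).roots).map (fun μ => μ - ν)).prod)).prod := by
    have e1 : (((Qc (n+2)).roots).map (fun ν => eval ν (Qc (n+1)))).prod
        = (((Qc (n+2)).roots).map
            (fun ν => (2:ℂ)^(n+1) * ((-1:ℂ)^(n+1) *
              (((Qc (n+1)).roots).map (fun μ => μ - ν)).prod))).prod := by
      congr 1
      refine Multiset.map_congr rfl fun ν _ => ?_
      rw [Qc_eval_eq_prod (n+1) ν]
      congr 1
      have e2 : (fun μ : ℂ => ν - μ) = fun μ : ℂ => -(μ - ν) := by funext μ; ring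
      rw [e2, multiset_prod_neg, Qc_card_roots]
    rw [e1, multiset_prod_const_mul, Qc_card_roots]
    have e3 : (((Qc (n+2)).roots).map
          (fun ν => (-1:ℂ)^(n+1) * (((Qc (n+1)).roots).map (fun μ => μ - ν)).prod)).prod
        = ((-1:ℂ)^(n+1)) ^ (n+2) *
          (((Qc (n+2)).roots).map
            (fun ν => (((Qc (n+1)).roots).map (fun μ => μ - ν)).prod)).prod := by
      rw [multiset_prod_const_mul, Qc_card_roots]
    rw [e3, mul_assoc]
  rw [hL, hR, multiset_prod_comm _ _ (fun μ ν => μ - ν)]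
  have h1 : ((-1:ℂ)^(n+1)) ^ (n+2) = 1 := by
    rw [← pow_mul]
    refine Even.neg_one_pow ?_
    have := Nat.even_mul_succ_self (n+1)
    rwa [show n+1+1 = n+2 from by omega] at this
  rw [h1, mul_one, ← pow_mul, ← pow_mul]
  ring_nf

noncomputable def Tv (n : ℕ) : ℂ :=
  (((Qc (n+1)).roots).map (fun μ => eval μ (Qc n))).prod

lemma Tv_zero : Tv 0 = 1 := by
  unfold Tv
  rw [Qc_zero]
  simp

lemma Tv_succ (n : ℕ) : Tv (n+1) = (-(2*((n:ℂ)+1)))^(n+1) * Tv n := by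
  unfold Tv
  rw [← swap_eval n]
  have e1 : (((Qc (n+1)).roots).map (fun μ => eval μ (Qc (n+2)))).prod
      = (((Qc (n+1)).roots).map (fun μ => (-(2*((n:ℂ)+1))) * eval μ (Qc n))).prod := by
    congr 1
    refine Multiset.map_congr rfl fun μ hμ => ?_
    have hroot : eval μ (Qc (n+1)) = 0 := (Polynomial.mem_roots'.mp hμ).2
    rw [Qc_rec3 n]
    simp only [eval_sub, eval_mul, eval_C, eval_X, eval_ofNat, hroot]
    ring
  rw [e1, multiset_prod_const_mul, Qc_card_roots]

lemma Tv_eq (n : ℕ) : Tv n = ∏ j ∈ Finset.Icc 1 n, (-(2*(j:ℂ)))^j := by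
  induction n with
  | zero => simp [Tv_zero]
  | succ n ih =>
      rw [Tv_succ, ih, Finset.prod_Icc_succ_top (by omega : 1 ≤ n+1)]
      push_cast
      ring

lemma Tv_closed (n : ℕ) :
    Tv n = (-1)^(∑ j ∈ Finset.Icc 1 n, j) * 2^(∑ j ∈ Finset.Icc 1 n, j)
      * ∏ j ∈ Finset.Icc 1 n, (j:ℂ)^j := by
  rw [Tv_eq, ← Finset.prod_pow_eq_pow_sum, ← Finset.prod_pow_eq_pow_sum,
    ← Finset.prod_mul_distrib, ← Finset.prod_mul_distrib]
  refine Finset.prod_congr rfl fun j _ => ?_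
  rw [show -(2*(j:ℂ)) = (-1) * 2 * (j:ℂ) from by ring, mul_pow, mul_pow]

lemma prod_offDiag_eq {d : ℕ} (f : Fin d → Fin d → ℂ) :
    ∏ q ∈ (Finset.univ : Finset (Fin d)).offDiag, f q.1 q.2
      = ∏ a, ∏ b ∈ Finset.univ.erase a, f a b := by
  rw [show (Finset.univ : Finset (Fin d)).offDiag = (Finset.univ ×ˢ Finset.univ).filter (fun q => q.1 ≠ q.2) from by ext q; simp, Finset.prod_filter, Finset.prod_product]
  refine Finset.prod_congr rfl fun a _ => ?_
  rw [← Finset.filter_ne, Finset.prod_filter]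

lemma prod_offDiag_pairing {d : ℕ} (g : Fin d → ℂ) :
    ∏ q ∈ (Finset.univ : Finset (Fin d)).offDiag, (g q.1 - g q.2)
      = (-1)^((Finset.univ : Finset (Fin d)).offDiag.filter (fun q => q.1 < q.2)).card
        * ∏ q ∈ (Finset.univ : Finset (Fin d)).offDiag.filter (fun q => q.1 < q.2),
            (g q.1 - g q.2)^2 := by
  classical
  rw [← Finset.prod_filter_mul_prod_filter_not _ (fun q => q.1 < q.2)]
  have hswap : ∏ q ∈ (Finset.univ : Finset (Fin d)).offDiag.filter (fun q => ¬ q.1 < q.2),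
      (g q.1 - g q.2)
      = ∏ q ∈ (Finset.univ : Finset (Fin d)).offDiag.filter (fun q => q.1 < q.2),
          (g q.2 - g q.1) := by
    refine Finset.prod_nbij' Prod.swap Prod.swap ?_ ?_ ?_ ?_ ?_
    · rintro ⟨a, b⟩ hab
      simp only [Finset.mem_filter, Finset.mem_offDiag] at hab ⊢
      obtain ⟨⟨_, _, hne⟩, hlt⟩ := hab
      exact ⟨⟨by simp, by simp, fun h => hne h.symm⟩, by
        simp only [Prod.fst_swap, Prod.snd_swap]
        omega⟩
    · rintro ⟨a, b⟩ hab
      simp only [Finset.mem_filter, Finset.mem_offDiag] at hab ⊢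
      obtain ⟨⟨_, _, hne⟩, hlt⟩ := hab
      exact ⟨⟨by simp, by simp, fun h => hne h.symm⟩, by
        simp only [Prod.fst_swap, Prod.snd_swap]
        omega⟩
    · intro a _; simp
    · intro a _; simp
    · intro a _; simp
  rw [hswap, ← Finset.prod_mul_distrib]
  calc ∏ q ∈ (Finset.univ : Finset (Fin d)).offDiag.filter (fun q => q.1 < q.2), ((g q.1 - g q.2) * (g q.2 - g q.1))
      = ∏ q ∈ (Finset.univ : Finset (Fin d)).offDiag.filter (fun q => q.1 < q.2), ((-1) * (g q.1 - g q.2)^2) := by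
        refine Finset.prod_congr rfl fun q _ => by ring
    _ = _ := by
        rw [Finset.prod_mul_distrib, Finset.prod_const]

lemma card_filter_lt (d : ℕ) :
    ((Finset.univ : Finset (Fin d)).offDiag.filter (fun q => q.1 < q.2)).card * 2
      = d*d - d := by
  classical
  have hcard := Finset.card_filter_add_card_filter_not
      (s := (Finset.univ : Finset (Fin d)).offDiag) (p := fun q => q.1 < q.2)
  have hswap : ((Finset.univ : Finset (Fin d)).offDiag.filter fun q => ¬ q.1 < q.2).card
      = ((Finset.univ : Finset (Fin d)).offDiag.filter fun q => q.1 < q.2).card := by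
    refine Finset.card_nbij' Prod.swap Prod.swap ?_ ?_ ?_ ?_
    · rintro ⟨a, b⟩ hab
      simp only [Finset.mem_coe, Finset.mem_filter, Finset.mem_offDiag] at hab ⊢
      obtain ⟨⟨-, -, hne⟩, hlt⟩ := hab
      refine ⟨⟨by simp, by simp, fun h => hne h.symm⟩, ?_⟩
      simp only [Prod.fst_swap, Prod.snd_swap]
      omega
    · rintro ⟨a, b⟩ hab
      simp only [Finset.mem_coe, Finset.mem_filter, Finset.mem_offDiag] at hab ⊢
      obtain ⟨⟨-, -, hne⟩, hlt⟩ := hab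
      refine ⟨⟨by simp, by simp, fun h => hne h.symm⟩, ?_⟩
      simp only [Prod.fst_swap, Prod.snd_swap]
      omega
    · intro a _; simp
    · intro a _; simp
  have h3 : ((Finset.univ : Finset (Fin d)).offDiag).card = d*d - d := by
    rw [Finset.offDiag_card, Finset.card_univ, Fintype.card_fin]
  omega

lemma gauss_sum (e : ℕ) : (∑ j ∈ Finset.Icc 1 e, j) * 2 = e * (e+1) := by
  induction e with
  | zero => simp
  | succ e ih =>
      rw [Finset.sum_Icc_succ_top (by omega : 1 ≤ e+1), add_mul, ih]
      ring

theorem hermite_discriminant_product (d : ℕ) (hd : 1 ≤ d) (mu : Fin d → ℝ)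
    (hinj : Function.Injective mu)
    (hroot : ∀ a : Fin d, (hermitePh d).eval (mu a) = 0) :
    ∏ q ∈ (Finset.univ : Finset (Fin d)).offDiag.filter (fun q => q.1 < q.2),
        (mu q.1 - mu q.2) ^ 2 =
      (∏ ν ∈ Finset.Icc 1 d, (ν : ℝ) ^ ν) / 2 ^ (d * (d - 1) / 2) := by
  classical
  obtain ⟨e, rfl⟩ : ∃ e, d = e + 1 := ⟨d - 1, by omega⟩
  set ν : Fin (e+1) → ℂ := fun a => ((mu a : ℝ) : ℂ) with hν
  have hν_inj : Function.Injective ν := fun a b h => hinj (Complex.ofReal_inj.mp h)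
  -- roots of Qc (e+1) are exactly the ν a
  have hroots : (Qc (e+1)).roots = Multiset.map ν Finset.univ.val := by
    have hnodup : (Multiset.map ν Finset.univ.val).Nodup :=
      Finset.univ.nodup.map hν_inj
    have hle : Multiset.map ν Finset.univ.val ≤ (Qc (e+1)).roots := by
      rw [Multiset.le_iff_subset hnodup]
      intro x hx
      obtain ⟨a, -, rfl⟩ := Multiset.mem_map.mp hx
      refine Polynomial.mem_roots'.mpr ⟨Qc_ne_zero _, ?_⟩
      show eval (ν a) (Qc (e+1)) = 0
      have hνa : ν a = algebraMap ℝ ℂ (mu a) := rfl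
      rw [hνa, Qc, eval_map, eval₂_at_apply, hroot a, map_zero]
    refine (Multiset.eq_of_le_of_card_le hle ?_).symm
    rw [Qc_card_roots]
    simp
  have hprod_conv : ∀ g : ℂ → ℂ,
      ((Qc (e+1)).roots.map g).prod = ∏ a : Fin (e+1), g (ν a) := by
    intro g
    rw [hroots, Multiset.map_map, Finset.prod_eq_multiset_prod]
    rfl
  -- step A : product of derivative evaluations via Tv
  have hA : (∏ a : Fin (e+1), eval (ν a) (derivative (Qc (e+1))))
      = (2*((e:ℂ)+1))^(e+1) * Tv e := by
    have h1 : ∀ a : Fin (e+1),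
        eval (ν a) (derivative (Qc (e+1))) = (2*((e:ℂ)+1)) * eval (ν a) (Qc e) := by
      intro a; rw [Qc_deriv e, eval_mul, eval_C]
    rw [Finset.prod_congr rfl (fun a _ => h1 a), Finset.prod_mul_distrib, Finset.prod_const,
      Finset.card_univ, Fintype.card_fin]
    congr 1
    rw [Tv, hprod_conv]
  -- step B : product of derivative evaluations via Vandermonde
  have hB : ∀ a : Fin (e+1), eval (ν a) (derivative (Qc (e+1)))
      = 2^(e+1) * ∏ b ∈ Finset.univ.erase a, (ν a - ν b) := by
    intro a
    conv_lhs => rw [Qc_eq_prod (e+1)]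
    rw [derivative_C_mul, eval_mul, eval_C]
    congr 1
    have hmem : ν a ∈ (Qc (e+1)).roots := by
      rw [hroots]; exact Multiset.mem_map.mpr ⟨a, by simp, rfl⟩
    rw [eval_multiset_prod_X_sub_C_derivative hmem, hroots,
      ← Multiset.map_erase ν hν_inj, Multiset.map_map, ← Finset.erase_val,
      Finset.prod_eq_multiset_prod]
    rfl
  have hprodB : (∏ a : Fin (e+1), eval (ν a) (derivative (Qc (e+1))))
      = ((2:ℂ)^(e+1))^(e+1) * ∏ a : Fin (e+1), ∏ b ∈ Finset.univ.erase a, (ν a - ν b) := by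
    rw [Finset.prod_congr rfl (fun a _ => hB a), Finset.prod_mul_distrib, Finset.prod_const,
      Finset.card_univ, Fintype.card_fin]
  -- Vandermonde pairing
  have hC : (∏ a : Fin (e+1), ∏ b ∈ Finset.univ.erase a, (ν a - ν b))
      = (-1)^((Finset.univ : Finset (Fin (e+1))).offDiag.filter (fun q => q.1 < q.2)).card
        * ∏ q ∈ (Finset.univ : Finset (Fin (e+1))).offDiag.filter (fun q => q.1 < q.2),
            (ν q.1 - ν q.2)^2 := by
    rw [← prod_offDiag_eq (fun a b => ν a - ν b), prod_offDiag_pairing ν]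
  -- numeric facts
  have hGauss := gauss_sum e
  have hcS : ((Finset.univ : Finset (Fin (e+1))).offDiag.filter (fun q => q.1 < q.2)).card
      = ∑ j ∈ Finset.Icc 1 e, j := by
    refine Nat.eq_of_mul_eq_mul_right two_pos ?_
    rw [card_filter_lt (e+1), hGauss]
    have : (e+1)*(e+1) = e*(e+1) + (e+1) := by ring
    rw [this, Nat.add_sub_cancel]
  rw [hcS] at hC
  -- master identity
  have master : ((2:ℂ)^(e+1))^(e+1) * ((-1)^(∑ j ∈ Finset.Icc 1 e, j)
        * ∏ q ∈ (Finset.univ : Finset (Fin (e+1))).offDiag.filter (fun q => q.1 < q.2),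
            (ν q.1 - ν q.2)^2)
      = (2*((e:ℂ)+1))^(e+1) * ((-1)^(∑ j ∈ Finset.Icc 1 e, j)
        * 2^(∑ j ∈ Finset.Icc 1 e, j) * ∏ j ∈ Finset.Icc 1 e, (j:ℂ)^j) := by
    calc ((2:ℂ)^(e+1))^(e+1) * ((-1)^(∑ j ∈ Finset.Icc 1 e, j)
          * ∏ q ∈ (Finset.univ : Finset (Fin (e+1))).offDiag.filter (fun q => q.1 < q.2),
              (ν q.1 - ν q.2)^2)
        = ((2:ℂ)^(e+1))^(e+1) * ∏ a : Fin (e+1), ∏ b ∈ Finset.univ.erase a, (ν a - ν b) := by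
          rw [hC]
      _ = (∏ a : Fin (e+1), eval (ν a) (derivative (Qc (e+1)))) := by exact hprodB.symm
      _ = (2*((e:ℂ)+1))^(e+1) * Tv e := by exact hA
      _ = _ := by rw [Tv_closed]
  -- final numeric manipulations
  have hexp : (e+1)*e/2 = ∑ j ∈ Finset.Icc 1 e, j := by
    rw [mul_comm, ← hGauss, Nat.mul_div_cancel _ two_pos]
  have hsign : ((-1:ℂ))^(∑ j ∈ Finset.Icc 1 e, j) * (-1)^(∑ j ∈ Finset.Icc 1 e, j) = 1 := by
    rw [← pow_add]
    exact Even.neg_one_pow ⟨∑ j ∈ Finset.Icc 1 e, j, rfl⟩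
  have hpow : ((2:ℂ)^(e+1))^(e+1)
      = 2^(e+1) * 2^(∑ j ∈ Finset.Icc 1 e, j) * 2^(∑ j ∈ Finset.Icc 1 e, j) := by
    rw [← pow_mul, ← pow_add, ← pow_add]
    congr 1
    have h1 : (e+1)*(e+1) = (e+1) + e*(e+1) := by ring
    rw [h1, ← hGauss, mul_two]
    omega
  have hmulpow : (2*((e:ℂ)+1))^(e+1) = 2^(e+1) * ((e:ℂ)+1)^(e+1) := mul_pow _ _ _
  simp only [hν] at master
  -- cast the goal to ℂ
  rw [← Complex.ofReal_inj]
  push_cast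
  rw [hexp, Finset.prod_Icc_succ_top (by omega : 1 ≤ e+1),
    eq_div_iff (pow_ne_zero _ (two_ne_zero (α := ℂ)))]
  push_cast
  apply mul_left_cancel₀ (a := (2:ℂ)^(e+1) * 2^(∑ j ∈ Finset.Icc 1 e, j))
    (mul_ne_zero (pow_ne_zero _ two_ne_zero) (pow_ne_zero _ two_ne_zero))
  have master2 : ((2:ℂ)^(e+1))^(e+1)
        * (∏ q ∈ (Finset.univ : Finset (Fin (e+1))).offDiag.filter (fun q => q.1 < q.2),
            (((mu q.1 : ℝ):ℂ) - ((mu q.2 : ℝ):ℂ))^2)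
      = (2*((e:ℂ)+1))^(e+1) * 2^(∑ j ∈ Finset.Icc 1 e, j) * ∏ j ∈ Finset.Icc 1 e, (j:ℂ)^j := by
    linear_combination ((-1:ℂ)^(∑ j ∈ Finset.Icc 1 e, j)) * master
      - (((2:ℂ)^(e+1))^(e+1)
          * (∏ q ∈ (Finset.univ : Finset (Fin (e+1))).offDiag.filter (fun q => q.1 < q.2),
              (((mu q.1 : ℝ):ℂ) - ((mu q.2 : ℝ):ℂ))^2)
        - (2*((e:ℂ)+1))^(e+1) * 2^(∑ j ∈ Finset.Icc 1 e, j)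
          * ∏ j ∈ Finset.Icc 1 e, (j:ℂ)^j) * hsign
  linear_combination master2
    - (∏ q ∈ (Finset.univ : Finset (Fin (e+1))).offDiag.filter (fun q => q.1 < q.2),
        (((mu q.1 : ℝ):ℂ) - ((mu q.2 : ℝ):ℂ))^2) * hpow
    + (2:ℂ)^(∑ j ∈ Finset.Icc 1 e, j) * (∏ j ∈ Finset.Icc 1 e, (j:ℂ)^j) * hmulpow
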